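/- Let C ≥ 1. There exist: a decreasing sequence of positive reals δ_n ↘ 0 with δ_1 < 2C; a decreasing sequence of positive reals ρ_n ↘ 0; positive reals κ_{n,m} such that for each n the sequence (κ_{n,m})_m is decreasing with κ_{n,m} → 0 as m → ∞ and ρ_n > 2κ_{n,m} for all n,m; and an equi-Lipschitz system of non-negative, C^∞-smooth, convex functions g_{n,m,l} : 𝒟_{n,l} → [0,1], for n,m ∈ ℕ and l = 1,…,n, where 𝒟_{n,l} := [0, 2nC − δ_n(n−l)] × [0, 1+2nC], satisfying: (A1) g_{n,m,l}(t,s) = 0 iff (t,s) ∈ 𝒩_{n,l} := [0, lδ_n] × [0, 1+2nC]; (A2) for l < n, g_{n,m,l}(t,s) ≥ g_{n,m,l+1}(t,s) + ρ_n whenever (t,s) ∈ 𝒟_{n,l} \ 𝒩_{n,l+1}; (A3) if (t,0) ∈ 𝒟_{n,l} \ 𝒩_{n,l}, then s ↦ g_{n,m,l}(t,s) is increasing on [0,1+2nC] and g_{n,m,l}(t,1+2nC) − g_{n,m,l}(t,0) ≤ κ_{n,m}; (A4) if (t,0) ∈ 𝒟_{n,l} then g_{n,m,l}(t,0) = g_{n,m+1,l}(t,0);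 (A5) for l < n and all (t,s) ∈ 𝒟_{n,l} \ 𝒩_{n,l}, g_{n,m,l}(t,s) < g_{n,m,l+1}(t+r,s) whenever r > δ_n and (t+r,s) ∈ 𝒟_{n,l+1}; (A6) if (t,s) ∈ 𝒟_{n,l} \ 𝒩_{n,l}, (t_r,s_r) ∈ 𝒟_{n,l}, t_r → t and g_{n,m,l}(t_r,s_r) → g_{n,m,l}(t,s), then s_r → s; (A7) the map (t,s) ↦ g_{n,m,l}(|t|,|s|) is monotone in each variable on 𝒟_{n,l}, i.e. g_{n,m,l}(t,s) ≤ g_{n,m,l}(t',s') whenever 0 ≤ t ≤ t' and 0 ≤ s ≤ s' with (t',s') ∈ 𝒟_{n,l}. -/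

import Mathlib

open Filter Topology

/-- The domain `𝒟_{n,l} = [0, 2nC - δ_n (n - l)] × [0, 1 + 2nC]`. -/
def gDom (C : ℝ) (δ : ℕ → ℝ) (n l : ℕ) : Set (ℝ × ℝ) :=
  Set.Icc (0 : ℝ) (2 * n * C - δ n * ((n : ℝ) - l)) ×ˢ Set.Icc (0 : ℝ) (1 + 2 * n * C)

/-- The null set `𝒩_{n,l} = [0, l δ_n] × [0, 1 + 2nC]`. -/
def gNull (C : ℝ) (δ : ℕ → ℝ) (n l : ℕ) : Set (ℝ × ℝ) :=
  Set.Icc (0 : ℝ) ((l : ℝ) * δ n) ×ˢ Set.Icc (0 : ℝ) (1 + 2 * n * C)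



noncomputable def uu (x : ℝ) : ℝ := x * expNegInvGlue x
noncomputable def vv (x : ℝ) : ℝ := (uu x) ^ 2

lemma uu_contDiff : ContDiff ℝ ((⊤ : ℕ∞) : WithTop ℕ∞) uu :=
  contDiff_id.mul expNegInvGlue.contDiff

lemma uu_of_nonpos {x : ℝ} (h : x ≤ 0) : uu x = 0 := by
  simp [uu, expNegInvGlue.zero_of_nonpos h]

lemma uu_pos {x : ℝ} (h : 0 < x) : 0 < uu x :=
  mul_pos h (expNegInvGlue.pos_of_pos h)

lemma uu_nonneg (x : ℝ) : 0 ≤ uu x := by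
  rcases le_or_gt x 0 with h | h
  · simp [uu_of_nonpos h]
  · exact (uu_pos h).le

lemma expNegInvGlue_mono : Monotone expNegInvGlue := by
  intro x y h
  rcases le_or_gt x 0 with hx | hx
  · rw [expNegInvGlue.zero_of_nonpos hx]; exact expNegInvGlue.nonneg y
  · have hy : 0 < y := lt_of_lt_of_le hx h
    simp only [expNegInvGlue, not_le.2 hx, not_le.2 hy, if_neg, if_false]
    exact Real.exp_le_exp.2 (by
      have := inv_anti₀ hx h
      linarith)

lemma uu_mono : Monotone uu := by
  intro x y h
  rcases le_or_gt x 0 with hx | hx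
  · rw [uu_of_nonpos hx]; exact uu_nonneg y
  · have hy : 0 < y := lt_of_lt_of_le hx h
    exact mul_le_mul h (expNegInvGlue_mono h) (expNegInvGlue.nonneg x) hy.le

lemma uu_strict {x y : ℝ} (hx : 0 ≤ x) (h : x < y) : uu x < uu y := by
  rcases eq_or_lt_of_le hx with rfl | hx'
  · rw [uu_of_nonpos le_rfl]; exact uu_pos h
  · have hy : 0 < y := lt_trans hx' h
    calc uu x = x * expNegInvGlue x := rfl
    _ < y * expNegInvGlue x := by
        exact mul_lt_mul_of_pos_right h (expNegInvGlue.pos_of_pos hx')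
    _ ≤ y * expNegInvGlue y := by
        exact mul_le_mul_of_nonneg_left (expNegInvGlue_mono h.le) hy.le
    _ = uu y := rfl

lemma uu_hasDerivAt {x : ℝ} (hx : 0 < x) :
    HasDerivAt uu (Real.exp (-x⁻¹) * (1 + x⁻¹)) x := by
  have h1 : HasDerivAt (fun y : ℝ => y * Real.exp (-y⁻¹))
      (1 * Real.exp (-x⁻¹) + x * (Real.exp (-x⁻¹) * (x ^ 2)⁻¹)) x := by
    have hinner : HasDerivAt (fun y : ℝ => -y⁻¹) ((x ^ 2)⁻¹) x := by
      have := (hasDerivAt_inv hx.ne').neg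
      convert this using 1
      all_goals first | rfl | rw [neg_neg]
    exact (hasDerivAt_id x).mul (hinner.exp)
  have heq : (fun y : ℝ => y * Real.exp (-y⁻¹)) =ᶠ[𝓝 x] uu := by
    filter_upwards [eventually_gt_nhds hx] with y hy
    simp [uu, expNegInvGlue, not_le.2 hy]
  have := h1.congr_of_eventuallyEq heq.symm
  convert this using 1
  all_goals try rfl
  field_simp

lemma uu_deriv {x : ℝ} (hx : 0 < x) : deriv uu x = Real.exp (-x⁻¹) * (1 + x⁻¹) :=
  (uu_hasDerivAt hx).deriv

lemma uu_deriv_mono : MonotoneOn (deriv uu) (Set.Ioi (0 : ℝ)) := by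
  intro x hx y hy hxy
  have hx0 : (0:ℝ) < x := hx
  have hy0 : (0:ℝ) < y := hy
  rw [uu_deriv hx0, uu_deriv hy0]
  have hd : 0 ≤ x⁻¹ - y⁻¹ := by
    have := inv_anti₀ hx0 hxy
    linarith
  have hyi : 0 ≤ y⁻¹ := by positivity
  have key : (1 + x⁻¹) ≤ (1 + y⁻¹) * Real.exp (x⁻¹ - y⁻¹) := by
    have h1 := Real.add_one_le_exp (x⁻¹ - y⁻¹)
    nlinarith
  have e1 : Real.exp (-x⁻¹) * Real.exp (x⁻¹ - y⁻¹) = Real.exp (-y⁻¹) := by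
    rw [← Real.exp_add]; ring_nf
  calc Real.exp (-x⁻¹) * (1 + x⁻¹)
      ≤ Real.exp (-x⁻¹) * ((1 + y⁻¹) * Real.exp (x⁻¹ - y⁻¹)) :=
        mul_le_mul_of_nonneg_left key (Real.exp_pos _).le
    _ = (Real.exp (-x⁻¹) * Real.exp (x⁻¹ - y⁻¹)) * (1 + y⁻¹) := by ring
    _ = Real.exp (-y⁻¹) * (1 + y⁻¹) := by rw [e1]

lemma convexOn_uu_Ici : ConvexOn ℝ (Set.Ici (0:ℝ)) uu := by
  apply MonotoneOn.convexOn_of_deriv (convex_Ici 0)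
    (uu_contDiff.continuous.continuousOn)
  · intro x hx
    rw [interior_Ici] at hx
    exact (uu_hasDerivAt hx).differentiableAt.differentiableWithinAt
  · rw [interior_Ici]; exact uu_deriv_mono

lemma convexOn_uu : ConvexOn ℝ Set.univ uu := by
  refine ⟨convex_univ, ?_⟩
  intro x _ y _ a b ha hb hab
  simp only [smul_eq_mul]
  rcases le_or_gt x 0 with hx | hx <;> rcases le_or_gt y 0 with hy | hy
  · have : a * x + b * y ≤ 0 := by nlinarith
    rw [uu_of_nonpos this, uu_of_nonpos hx, uu_of_nonpos hy]; nlinarith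
  · -- x ≤ 0 < y
    rw [uu_of_nonpos hx]
    rcases le_or_gt (a * x + b * y) 0 with hm | hm
    · rw [uu_of_nonpos hm]
      have := uu_nonneg y
      nlinarith
    · have h1 : uu (a * x + b * y) ≤ uu (b * y) := by
        apply uu_mono; nlinarith
      have h2 : uu (b * y) ≤ a * uu 0 + b * uu y := by
        have := convexOn_uu_Ici.2 (Set.mem_Ici.2 le_rfl) (Set.mem_Ici.2 hy.le) ha hb hab
        simpa using this
      rw [uu_of_nonpos le_rfl] at h2
      nlinarith [h1, h2]
  · -- y ≤ 0 < x
    rw [uu_of_nonpos hy]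
    rcases le_or_gt (a * x + b * y) 0 with hm | hm
    · rw [uu_of_nonpos hm]
      have := uu_nonneg x
      nlinarith
    · have h1 : uu (a * x + b * y) ≤ uu (a * x) := by
        apply uu_mono; nlinarith
      have h2 : uu (a * x) ≤ a * uu x + b * uu 0 := by
        have := convexOn_uu_Ici.2 (Set.mem_Ici.2 hx.le) (Set.mem_Ici.2 le_rfl) ha hb hab
        simpa using this
      rw [uu_of_nonpos le_rfl] at h2
      nlinarith [h1, h2]
  · have := convexOn_uu_Ici.2 (Set.mem_Ici.2 hx.le) (Set.mem_Ici.2 hy.le) ha hb hab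
    simpa using this


lemma vv_contDiff : ContDiff ℝ ((⊤ : ℕ∞) : WithTop ℕ∞) vv := by
  have : vv = fun x => (uu x) ^ 2 := rfl
  rw [this]; exact uu_contDiff.pow 2

lemma vv_nonneg (x : ℝ) : 0 ≤ vv x := sq_nonneg _

lemma vv_pos {x : ℝ} (h : 0 < x) : 0 < vv x := pow_pos (uu_pos h) 2

lemma vv_of_nonpos {x : ℝ} (h : x ≤ 0) : vv x = 0 := by
  simp [vv, uu_of_nonpos h]

lemma vv_eq_zero_iff {x : ℝ} : vv x = 0 ↔ x ≤ 0 := by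
  constructor
  · intro h
    by_contra hx
    exact absurd h (ne_of_gt (vv_pos (not_le.1 hx)))
  · exact vv_of_nonpos

lemma vv_mono : Monotone vv := fun x y h =>
  pow_le_pow_left₀ (uu_nonneg x) (uu_mono h) 2

lemma vv_strict {x y : ℝ} (hx : 0 ≤ x) (h : x < y) : vv x < vv y :=
  pow_lt_pow_left₀ (uu_strict hx h) (uu_nonneg x) two_ne_zero

lemma convexOn_vv : ConvexOn ℝ Set.univ vv := by
  refine ⟨convex_univ, ?_⟩
  intro x _ y _ a b ha hb hab
  simp only [smul_eq_mul]
  have hu := convexOn_uu.2 (Set.mem_univ x) (Set.mem_univ y) ha hb hab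
  simp only [smul_eq_mul] at hu
  have h0 := uu_nonneg (a * x + b * y)
  have h1 := uu_nonneg x
  have h2 := uu_nonneg y
  have hb' : b = 1 - a := by linarith
  subst hb'
  simp only [vv]
  nlinarith [sq_nonneg (uu x - uu y), mul_nonneg ha hb]

lemma convexOn_vv_mul {x y a b : ℝ} (ha : 0 ≤ a) (hb : 0 ≤ b) (hab : a + b = 1) :
    vv (a * x + b * y) ≤ a * vv x + b * vv y := by
  have := convexOn_vv.2 (Set.mem_univ x) (Set.mem_univ y) ha hb hab
  simpa using this

/-- Perspective-type inequality for `vv`. -/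
lemma vv_perspective {x1 x2 y1 y2 a b : ℝ} (hy1 : 0 < y1) (hy2 : 0 < y2)
    (ha : 0 ≤ a) (hb : 0 ≤ b) (hab : a + b = 1) :
    vv (a * x1 + b * x2) / (a * y1 + b * y2) ≤ a * (vv x1 / y1) + b * (vv x2 / y2) := by
  have hu := convexOn_uu.2 (Set.mem_univ x1) (Set.mem_univ x2) ha hb hab
  simp only [smul_eq_mul] at hu
  set w1 := uu x1 with hw1
  set w2 := uu x2 with hw2
  have hw1n : 0 ≤ w1 := uu_nonneg x1
  have hw2n : 0 ≤ w2 := uu_nonneg x2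
  have h0 := uu_nonneg (a * x1 + b * x2)
  have hvvle : vv (a * x1 + b * x2) ≤ (a * w1 + b * w2) ^ 2 := by
    simp only [vv]; nlinarith
  have hy : 0 < a * y1 + b * y2 := by
    rcases eq_or_lt_of_le ha with h | h
    · have hb1 : b = 1 := by linarith
      rw [← h, hb1]; linarith
    · nlinarith
  have persp : (a * w1 + b * w2) ^ 2 / (a * y1 + b * y2)
      ≤ a * (w1 ^ 2 / y1) + b * (w2 ^ 2 / y2) := by
    rw [div_le_iff₀ hy]
    have expand : a * (w1 ^ 2 / y1) + b * (w2 ^ 2 / y2)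
        = (a * w1 ^ 2 * y2 + b * w2 ^ 2 * y1) / (y1 * y2) := by
      field_simp
    rw [expand, div_mul_eq_mul_div, le_div_iff₀ (mul_pos hy1 hy2)]
    have hb' : b = 1 - a := by linarith
    subst hb'
    nlinarith [mul_nonneg (mul_nonneg ha hb) (sq_nonneg (w1 * y2 - w2 * y1))]
  calc vv (a * x1 + b * x2) / (a * y1 + b * y2)
      ≤ (a * w1 + b * w2) ^ 2 / (a * y1 + b * y2) := (div_le_div_iff_of_pos_right hy).mpr hvvle
    _ ≤ a * (w1 ^ 2 / y1) + b * (w2 ^ 2 / y2) := persp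
    _ = a * (vv x1 / y1) + b * (vv x2 / y2) := rfl

/-- Lipschitz bound for `vv` on `(-∞, M]`, one-sided version. -/
lemma vv_lip' {M x y : ℝ} (hxy : x ≤ y) (hy : y ≤ M) :
    vv y - vv x ≤ vv (M + 1) * (y - x) := by
  rcases eq_or_lt_of_le hxy with rfl | hlt
  · simp
  · have hden : (0:ℝ) < M + 1 - x := by linarith
    set b := (y - x) / (M + 1 - x) with hbdef
    set a := (M + 1 - y) / (M + 1 - x) with hadef
    have hb : 0 ≤ b := div_nonneg (by linarith) hden.le
    have ha : 0 ≤ a := div_nonneg (by linarith) hden.le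
    have hab : a + b = 1 := by rw [hadef, hbdef]; field_simp; ring
    have h := convexOn_vv_mul (x := x) (y := M + 1) ha hb hab
    have hrep : a * x + b * (M + 1) = y := by rw [hadef, hbdef]; field_simp; ring
    rw [hrep] at h
    have hble : b ≤ y - x := by
      rw [hbdef, div_le_iff₀ hden]
      nlinarith
    nlinarith [vv_nonneg x, vv_nonneg (M + 1),
      mul_le_mul_of_nonneg_left hble (vv_nonneg (M + 1))]

lemma vv_lip {M x y : ℝ} (hx : x ≤ M) (hy : y ≤ M) :
    |vv x - vv y| ≤ vv (M + 1) * |x - y| := by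
  rcases le_total x y with h | h
  · rw [abs_sub_comm, abs_of_nonneg (by nlinarith [vv_mono h] : (0:ℝ) ≤ vv y - vv x),
      abs_sub_comm, abs_of_nonneg (by linarith : (0:ℝ) ≤ y - x)]
    exact vv_lip' h hy
  · rw [abs_of_nonneg (by nlinarith [vv_mono h] : (0:ℝ) ≤ vv x - vv y),
      abs_of_nonneg (by linarith : (0:ℝ) ≤ x - y)]
    exact vv_lip' h hx

/-- Gap inequality from convexity: `vv d + vv (x - d) ≤ vv x` for `0 < d ≤ x`. -/
lemma vv_gap {d x : ℝ} (hd : 0 < d) (hx : d ≤ x) : vv d + vv (x - d) ≤ vv x := by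
  have hx0 : 0 < x := lt_of_lt_of_le hd hx
  have h1 : vv d ≤ (d / x) * vv x := by
    have ha : 0 ≤ (x - d) / x := div_nonneg (by linarith) hx0.le
    have hb : 0 ≤ d / x := by positivity
    have hab : (x - d) / x + d / x = 1 := by field_simp; ring
    have h := convexOn_vv_mul (x := (0:ℝ)) (y := x) ha hb hab
    have hrep : (x - d) / x * 0 + d / x * x = d := by field_simp; ring
    rw [hrep, vv_of_nonpos le_rfl] at h
    simpa using h
  have h2 : vv (x - d) ≤ ((x - d) / x) * vv x := by
    have ha : 0 ≤ d / x := by positivity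
    have hb : 0 ≤ (x - d) / x := div_nonneg (by linarith) hx0.le
    have hab : d / x + (x - d) / x = 1 := by field_simp; ring
    have h := convexOn_vv_mul (x := (0:ℝ)) (y := x) ha hb hab
    have hrep : d / x * 0 + (x - d) / x * x = x - d := by field_simp; ring
    rw [hrep, vv_of_nonpos le_rfl] at h
    simpa using h
  have h3 : (d / x) * vv x + ((x - d) / x) * vv x = vv x := by
    field_simp
    ring
  linarith


noncomputable def dd (n : ℕ) : ℝ := ((n : ℝ) + 1)⁻¹
noncomputable def cc (C : ℝ) (n : ℕ) : ℝ := ((2 + 2 * n * C) ^ 2 * vv (2 * n * C + 1))⁻¹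
noncomputable def bb (C : ℝ) (n : ℕ) : ℝ := cc C n * vv (dd n)
noncomputable def qq (C : ℝ) : ℕ → ℝ
  | 0 => bb C 0
  | n + 1 => min (qq C n) (bb C (n + 1))
noncomputable def rr (C : ℝ) (n : ℕ) : ℝ := qq C n * dd n
noncomputable def kk (C : ℝ) (n m : ℕ) : ℝ := rr C n / (4 * ((m : ℝ) + 1))
noncomputable def EE (C : ℝ) (n : ℕ) : ℝ := cc C n * vv (2 * n * C) * (1 + 2 * n * C)
noncomputable def KK (C : ℝ) (n m : ℕ) : ℝ :=
  (2 + 2 * n * C) + 4 * ((m : ℝ) + 1) * EE C n / rr C n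
noncomputable def gg (C : ℝ) (n m l : ℕ) (t s : ℝ) : ℝ :=
  cc C n * KK C n m * vv (t - (l : ℝ) * dd n) / (KK C n m - s)

lemma dd_pos (n : ℕ) : 0 < dd n := by rw [dd]; positivity

lemma dd_le_one (n : ℕ) : dd n ≤ 1 := by
  rw [dd]
  rw [inv_le_one_iff₀]
  right; exact le_add_of_nonneg_left (Nat.cast_nonneg n)

lemma dd_anti : StrictAnti dd := by
  intro x y h
  rw [dd, dd, inv_lt_inv₀ (by positivity) (by positivity)]
  exact_mod_cast by exact_mod_cast add_lt_add_left (Nat.cast_lt.2 h) 1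

lemma dd_tendsto : Tendsto dd atTop (𝓝 0) := by
  unfold dd
  simpa [dd, one_div] using tendsto_one_div_add_atTop_nhds_zero_nat (𝕜 := ℝ)

section WithC
variable {C : ℝ} (hC : 1 ≤ C)

lemma nC_nonneg (hC : 1 ≤ C) (n : ℕ) : (0:ℝ) ≤ 2 * n * C := by
  have h1 := Nat.cast_nonneg (α := ℝ) n
  have h2 : (0:ℝ) ≤ C := by linarith
  positivity

lemma cc_pos (hC : 1 ≤ C) (n : ℕ) : 0 < cc C n := by
  have h1 := nC_nonneg (C := C) hC n
  have h2 : 0 < vv (2 * n * C + 1) := vv_pos (by linarith)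
  rw [cc]; positivity

lemma bb_pos (hC : 1 ≤ C) (n : ℕ) : 0 < bb C n :=
  mul_pos (cc_pos hC n) (vv_pos (dd_pos n))

lemma qq_pos (hC : 1 ≤ C) (n : ℕ) : 0 < qq C n := by
  induction n with
  | zero => exact bb_pos hC 0
  | succ k ih => exact lt_min ih (bb_pos hC (k + 1))

lemma qq_succ_le (n : ℕ) : qq C (n + 1) ≤ qq C n := min_le_left _ _

lemma qq_anti : Antitone (qq C) :=
  antitone_nat_of_succ_le (qq_succ_le)

lemma qq_le_bb (n : ℕ) : qq C n ≤ bb C n := by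
  cases n with
  | zero => exact le_rfl
  | succ k => exact min_le_right _ _

lemma rr_pos (hC : 1 ≤ C) (n : ℕ) : 0 < rr C n := mul_pos (qq_pos hC n) (dd_pos n)

lemma rr_le_bb (hC : 1 ≤ C) (n : ℕ) : rr C n ≤ bb C n :=
  calc rr C n = qq C n * dd n := rfl
    _ ≤ qq C n * 1 := mul_le_mul_of_nonneg_left (dd_le_one n) (qq_pos hC n).le
    _ = qq C n := mul_one _
    _ ≤ bb C n := qq_le_bb n

lemma rr_anti (hC : 1 ≤ C) : StrictAnti (rr C) := by
  apply strictAnti_nat_of_succ_lt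
  intro n
  calc rr C (n + 1) = qq C (n + 1) * dd (n + 1) := rfl
    _ ≤ qq C n * dd (n + 1) :=
        mul_le_mul_of_nonneg_right (qq_succ_le n) (dd_pos (n + 1)).le
    _ < qq C n * dd n :=
        mul_lt_mul_of_pos_left (dd_anti (Nat.lt_succ_self n)) (qq_pos hC n)

lemma rr_tendsto (hC : 1 ≤ C) : Tendsto (rr C) atTop (𝓝 0) := by
  apply squeeze_zero (fun n => (rr_pos hC n).le)
    (fun n => ?_) (g := fun n => qq C 0 * dd n)
  · simpa using dd_tendsto.const_mul (qq C 0)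
  · calc rr C n = qq C n * dd n := rfl
      _ ≤ qq C 0 * dd n :=
        mul_le_mul_of_nonneg_right (qq_anti (Nat.zero_le n)) (dd_pos n).le

lemma kk_pos (hC : 1 ≤ C) (n m : ℕ) : 0 < kk C n m := by
  have := rr_pos hC n
  rw [kk]; positivity

lemma kk_anti (hC : 1 ≤ C) (n : ℕ) : StrictAnti (kk C n) := by
  intro x y h
  rw [kk, kk]
  apply div_lt_div_of_pos_left (rr_pos hC n) (by positivity)
  have : (x:ℝ) < y := Nat.cast_lt.2 h
  nlinarith

lemma kk_tendsto (hC : 1 ≤ C) (n : ℕ) : Tendsto (kk C n) atTop (𝓝 0) := by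
  have h : Tendsto (fun m : ℕ => rr C n / 4 * (1 / ((m:ℝ) + 1))) atTop (𝓝 (rr C n / 4 * 0)) :=
    tendsto_one_div_add_atTop_nhds_zero_nat.const_mul _
  rw [mul_zero] at h
  apply h.congr
  intro m
  rw [kk]
  field_simp

lemma kk_lt_rr (hC : 1 ≤ C) (n m : ℕ) : 2 * kk C n m < rr C n := by
  have h := rr_pos hC n
  have hm : (0:ℝ) ≤ (m:ℝ) := Nat.cast_nonneg m
  have hden : (0:ℝ) < 4 * ((m:ℝ) + 1) := by positivity
  have : kk C n m ≤ rr C n / 4 := by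
    rw [kk, div_le_div_iff₀ hden (by norm_num)]
    nlinarith
  nlinarith

lemma EE_nonneg (hC : 1 ≤ C) (n : ℕ) : 0 ≤ EE C n := by
  have h1 := nC_nonneg hC n
  exact mul_nonneg (mul_nonneg (cc_pos hC n).le (vv_nonneg _)) (by linarith)

lemma KK_ge (hC : 1 ≤ C) (n m : ℕ) : 2 + 2 * n * C ≤ KK C n m := by
  rw [KK]
  have h1 : 0 ≤ 4 * ((m : ℝ) + 1) * EE C n / rr C n := by
    apply div_nonneg _ (rr_pos hC n).le
    have := EE_nonneg hC n
    have : (0:ℝ) ≤ (m:ℝ) := Nat.cast_nonneg m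
    nlinarith [EE_nonneg hC n]
  linarith

lemma KK_pos (hC : 1 ≤ C) (n m : ℕ) : 0 < KK C n m := by
  have h1 := KK_ge hC n m
  have h2 := nC_nonneg hC n
  linarith

end WithC



set_option maxHeartbeats 2000000 in
/-- **Hájek–Procházka, Lemma 5.4.** There exist sequences `δ_n ↘ 0` (with `δ_1 < 2C`),
`ρ_n ↘ 0`, numbers `κ_{n,m} > 0` decreasing to `0` in `m` with `ρ_n > 2κ_{n,m}`, and an
equi-Lipschitz system of non-negative, `C^∞`-smooth, `1`-bounded convex functions
`g_{n,m,l} : 𝒟_{n,l} → [0,1]` satisfying (A1)–(A7). -/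
theorem exists_g_system (C : ℝ) (hC : 1 ≤ C) :
    ∃ (δ ρ : ℕ → ℝ) (κ : ℕ → ℕ → ℝ) (g : ℕ → ℕ → ℕ → ℝ → ℝ → ℝ) (L : NNReal),
      (∀ n, 0 < δ n) ∧ StrictAnti δ ∧ Tendsto δ atTop (𝓝 0) ∧ δ 1 < 2 * C ∧
      (∀ n, 0 < ρ n) ∧ StrictAnti ρ ∧ Tendsto ρ atTop (𝓝 0) ∧
      (∀ n m, 0 < κ n m) ∧ (∀ n, StrictAnti (κ n)) ∧
      (∀ n, Tendsto (κ n) atTop (𝓝 0)) ∧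
      (∀ n m, 2 * κ n m < ρ n) ∧
      (∀ n m l : ℕ, 1 ≤ l → l ≤ n →
        -- basic properties: equi-Lipschitz, `C^∞`-smooth, convex, values in `[0,1]`
        LipschitzOnWith L (fun p : ℝ × ℝ => g n m l p.1 p.2) (gDom C δ n l) ∧
        ContDiffOn ℝ ((⊤ : ℕ∞) : WithTop ℕ∞)
          (fun p : ℝ × ℝ => g n m l p.1 p.2) (gDom C δ n l) ∧
        ConvexOn ℝ (gDom C δ n l) (fun p : ℝ × ℝ => g n m l p.1 p.2) ∧
        (∀ p ∈ gDom C δ n l, g n m l p.1 p.2 ∈ Set.Icc (0 : ℝ) 1) ∧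
        -- (A1)
        (∀ p ∈ gDom C δ n l, (g n m l p.1 p.2 = 0 ↔ p ∈ gNull C δ n l)) ∧
        -- (A2)
        (l < n → ∀ p ∈ gDom C δ n l \ gNull C δ n (l + 1),
          g n m (l + 1) p.1 p.2 + ρ n ≤ g n m l p.1 p.2) ∧
        -- (A3)
        (∀ t : ℝ, (t, (0 : ℝ)) ∈ gDom C δ n l \ gNull C δ n l →
          StrictMonoOn (fun s => g n m l t s) (Set.Icc (0 : ℝ) (1 + 2 * n * C)) ∧
          g n m l t (1 + 2 * n * C) - g n m l t 0 ≤ κ n m) ∧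
        -- (A4)
        (∀ t : ℝ, (t, (0 : ℝ)) ∈ gDom C δ n l → g n m l t 0 = g n (m + 1) l t 0) ∧
        -- (A5)
        (l < n → ∀ t s r : ℝ, (t, s) ∈ gDom C δ n l \ gNull C δ n l → δ n < r →
          (t + r, s) ∈ gDom C δ n (l + 1) → g n m l t s < g n m (l + 1) (t + r) s) ∧
        -- (A6)
        (∀ t s : ℝ, (t, s) ∈ gDom C δ n l \ gNull C δ n l → ∀ tr sr : ℕ → ℝ,
          (∀ r : ℕ, (tr r, sr r) ∈ gDom C δ n l) → Tendsto tr atTop (𝓝 t) →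
          Tendsto (fun r => g n m l (tr r) (sr r)) atTop (𝓝 (g n m l t s)) →
          Tendsto sr atTop (𝓝 s)) ∧
        -- (A7)
        (∀ t s t' s' : ℝ, 0 ≤ t → t ≤ t' → 0 ≤ s → s ≤ s' →
          (t', s') ∈ gDom C δ n l → g n m l t s ≤ g n m l t' s')) := by
  have hdd1 : dd 1 < 2 * C := by
    have : dd 1 = 2⁻¹ := by rw [dd]; norm_num
    rw [this]; norm_num; linarith
  refine ⟨dd, rr C, kk C, gg C, 2, dd_pos, dd_anti, dd_tendsto, hdd1,
    rr_pos hC, rr_anti hC, rr_tendsto hC, kk_pos hC, kk_anti hC, kk_tendsto hC,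
    kk_lt_rr hC, ?_⟩
  intro n m l hl1 hln
  -- ---------------- common setup ----------------
  have hC0 : (0:ℝ) < C := by linarith
  have hn1 : 1 ≤ n := le_trans hl1 hln
  have hnR : (1:ℝ) ≤ (n:ℝ) := by exact_mod_cast hn1
  have hlR : (1:ℝ) ≤ (l:ℝ) := by exact_mod_cast hl1
  have hlnR : (l:ℝ) ≤ (n:ℝ) := by exact_mod_cast hln
  have hc : 0 < cc C n := cc_pos hC n
  have hM2 : (2:ℝ) ≤ 2 * n * C := by nlinarith
  have hK : 2 + 2 * n * C ≤ KK C n m := KK_ge hC n m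
  have hK0 : (0:ℝ) < KK C n m := by linarith
  have hv1 : 0 < vv (2 * n * C + 1) := vv_pos (by linarith)
  have hdd := dd_pos n
  have memD : ∀ (l' : ℕ) (p : ℝ × ℝ), p ∈ gDom C dd n l' ↔
      0 ≤ p.1 ∧ p.1 ≤ 2 * n * C - dd n * ((n:ℝ) - l') ∧ 0 ≤ p.2 ∧ p.2 ≤ 1 + 2 * n * C := by
    intro l' p
    simp only [gDom, Set.mem_prod, Set.mem_Icc, and_assoc]
  have memN : ∀ (l' : ℕ) (p : ℝ × ℝ), p ∈ gNull C dd n l' ↔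
      0 ≤ p.1 ∧ p.1 ≤ (l':ℝ) * dd n ∧ 0 ≤ p.2 ∧ p.2 ≤ 1 + 2 * n * C := by
    intro l' p
    simp only [gNull, Set.mem_prod, Set.mem_Icc, and_assoc]
  have hxM : ∀ t : ℝ, t ≤ 2 * n * C - dd n * ((n:ℝ) - l) → t - (l:ℝ) * dd n ≤ 2 * n * C := by
    intro t ht
    have e : dd n * ((n:ℝ) - l) = (n:ℝ) * dd n - (l:ℝ) * dd n := by ring
    have h2 : 0 ≤ (n:ℝ) * dd n := mul_nonneg (by linarith) hdd.le
    linarith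
  have hPv : ∀ s : ℝ, 0 ≤ s → s ≤ 1 + 2 * n * C →
      cc C n * KK C n m / (KK C n m - s) * vv (2 * n * C + 1) ≤ 1 := by
    intro s hs0 hsS
    have h1 : (1:ℝ) ≤ KK C n m - s := by linarith
    have h2 : KK C n m ≤ (2 + 2 * n * C) * (KK C n m - s) := by
      nlinarith [mul_le_mul_of_nonneg_left hK (show (0:ℝ) ≤ 1 + 2*n*C by linarith),
        mul_le_mul_of_nonneg_left hsS (show (0:ℝ) ≤ 2 + 2*n*C by linarith)]
    rw [div_mul_eq_mul_div, div_le_one (by linarith)]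
    have hceq : cc C n * KK C n m * vv (2 * n * C + 1) = KK C n m / (2 + 2 * n * C) ^ 2 := by
      rw [cc]; field_simp
    rw [hceq, div_le_iff₀ (by positivity)]
    nlinarith [mul_le_mul_of_nonneg_right
      (show (2 + 2*n*C) ≤ (2 + 2*n*C)^2 by nlinarith) (show (0:ℝ) ≤ KK C n m - s by linarith)]
  refine ⟨?_, ?_, ?_, ?_, ?_, ?_, ?_, ?_, ?_, ?_, ?_⟩
  -- ---------------- Lipschitz ----------------
  · apply LipschitzOnWith.of_dist_le_mul
    intro p hp q hq
    rw [memD] at hp hq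
    obtain ⟨hp1, hp2, hp3, hp4⟩ := hp
    obtain ⟨hq1, hq2, hq3, hq4⟩ := hq
    have hx1 : p.1 - (l:ℝ) * dd n ≤ 2 * n * C := hxM _ hp2
    have hx2 : q.1 - (l:ℝ) * dd n ≤ 2 * n * C := hxM _ hq2
    have hKp0 : (0:ℝ) < KK C n m - p.2 := by linarith
    have hKq0 : (0:ℝ) < KK C n m - q.2 := by linarith
    have hcoef : 0 ≤ cc C n * KK C n m / (KK C n m - p.2) :=
      div_nonneg (mul_nonneg hc.le hK0.le) hKp0.le
    have hstep1 : |gg C n m l p.1 p.2 - gg C n m l q.1 p.2| ≤ |p.1 - q.1| := by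
      have e : gg C n m l p.1 p.2 - gg C n m l q.1 p.2
          = cc C n * KK C n m / (KK C n m - p.2)
            * (vv (p.1 - (l:ℝ) * dd n) - vv (q.1 - (l:ℝ) * dd n)) := by
        simp only [gg]; ring
      rw [e, abs_mul, abs_of_nonneg hcoef]
      have hlip := vv_lip (M := 2 * n * C) hx1 hx2
      have e2 : p.1 - (l:ℝ) * dd n - (q.1 - (l:ℝ) * dd n) = p.1 - q.1 := by ring
      rw [e2] at hlip
      calc cc C n * KK C n m / (KK C n m - p.2)
            * |vv (p.1 - (l:ℝ)*dd n) - vv (q.1 - (l:ℝ)*dd n)|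
          ≤ cc C n * KK C n m / (KK C n m - p.2) * (vv (2*n*C + 1) * |p.1 - q.1|) :=
            mul_le_mul_of_nonneg_left hlip hcoef
        _ = (cc C n * KK C n m / (KK C n m - p.2) * vv (2*n*C + 1)) * |p.1 - q.1| := by
            ring
        _ ≤ 1 * |p.1 - q.1| :=
            mul_le_mul_of_nonneg_right (hPv _ hp3 hp4) (abs_nonneg _)
        _ = |p.1 - q.1| := one_mul _
    have hstep2 : |gg C n m l q.1 p.2 - gg C n m l q.1 q.2| ≤ |p.2 - q.2| := by
      have e : gg C n m l q.1 p.2 - gg C n m l q.1 q.2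
          = (cc C n * KK C n m * vv (q.1 - (l:ℝ) * dd n)
              / ((KK C n m - p.2) * (KK C n m - q.2))) * (p.2 - q.2) := by
        simp only [gg]
        rw [div_sub_div _ _ hKp0.ne' hKq0.ne', div_mul_eq_mul_div]
        congr 1
        ring
      rw [e, abs_mul]
      have hco2 : |cc C n * KK C n m * vv (q.1 - (l:ℝ)*dd n)
          / ((KK C n m - p.2) * (KK C n m - q.2))| ≤ 1 := by
        rw [abs_of_nonneg (div_nonneg (mul_nonneg (mul_nonneg hc.le hK0.le) (vv_nonneg _))
          (mul_pos hKp0 hKq0).le)]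
        have e3 : cc C n * KK C n m * vv (q.1 - (l:ℝ)*dd n)
              / ((KK C n m - p.2) * (KK C n m - q.2))
            = (cc C n * KK C n m / (KK C n m - p.2))
              * (vv (q.1 - (l:ℝ)*dd n) / (KK C n m - q.2)) := by
          field_simp
        rw [e3]
        have h4 : vv (q.1 - (l:ℝ)*dd n) / (KK C n m - q.2) ≤ vv (2*n*C + 1) := by
          rw [div_le_iff₀ hKq0]
          nlinarith [vv_mono (show q.1 - (l:ℝ)*dd n ≤ 2*n*C + 1 by linarith),
            vv_nonneg (2*n*C + 1)]
        calc cc C n * KK C n m / (KK C n m - p.2)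
              * (vv (q.1 - (l:ℝ)*dd n) / (KK C n m - q.2))
            ≤ cc C n * KK C n m / (KK C n m - p.2) * vv (2*n*C+1) :=
              mul_le_mul_of_nonneg_left h4 hcoef
          _ ≤ 1 := hPv _ hp3 hp4
      have := mul_le_mul_of_nonneg_right hco2 (abs_nonneg (p.2 - q.2))
      rw [one_mul] at this
      exact this
    have hd1 : |p.1 - q.1| ≤ dist p q := by
      calc |p.1 - q.1| = dist p.1 q.1 := (Real.dist_eq _ _).symm
        _ ≤ dist p q := by rw [Prod.dist_eq]; exact le_max_left _ _
    have hd2 : |p.2 - q.2| ≤ dist p q := by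
      calc |p.2 - q.2| = dist p.2 q.2 := (Real.dist_eq _ _).symm
        _ ≤ dist p q := by rw [Prod.dist_eq]; exact le_max_right _ _
    calc dist (gg C n m l p.1 p.2) (gg C n m l q.1 q.2)
        = |gg C n m l p.1 p.2 - gg C n m l q.1 q.2| := Real.dist_eq _ _
      _ ≤ |gg C n m l p.1 p.2 - gg C n m l q.1 p.2|
          + |gg C n m l q.1 p.2 - gg C n m l q.1 q.2| := abs_sub_le _ _ _
      _ ≤ dist p q + dist p q := add_le_add (hstep1.trans hd1) (hstep2.trans hd2)
      _ = (2:NNReal) * dist p q := by push_cast; ring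
  -- ---------------- smooth ----------------
  · simp only [gg]
    apply ContDiffOn.div
    · apply ContDiff.contDiffOn
      exact contDiff_const.mul (vv_contDiff.comp (contDiff_fst.sub contDiff_const))
    · exact (contDiff_const.sub contDiff_snd).contDiffOn
    · intro p hp
      rw [memD] at hp
      have : (0:ℝ) < KK C n m - p.2 := by linarith [hp.2.2.2]
      exact this.ne'
  -- ---------------- convex ----------------
  · constructor
    · simp only [gDom]
      exact (convex_Icc _ _).prod (convex_Icc _ _)
    · rintro ⟨t1, s1⟩ hp ⟨t2, s2⟩ hq α β hα hβ hαβ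
      rw [memD] at hp hq
      obtain ⟨hp1, hp2, hp3, hp4⟩ := hp
      obtain ⟨hq1, hq2, hq3, hq4⟩ := hq
      simp only [Prod.smul_mk, Prod.mk_add_mk, smul_eq_mul, gg]
      have hy1 : (0:ℝ) < KK C n m - s1 := by linarith
      have hy2 : (0:ℝ) < KK C n m - s2 := by linarith
      have key := vv_perspective (x1 := t1 - (l:ℝ)*dd n) (x2 := t2 - (l:ℝ)*dd n)
        (y1 := KK C n m - s1) (y2 := KK C n m - s2) hy1 hy2 hα hβ hαβ
      have e1 : α * (t1 - (l:ℝ)*dd n) + β * (t2 - (l:ℝ)*dd n)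
          = α * t1 + β * t2 - (l:ℝ)*dd n := by linear_combination (-((l:ℝ)*dd n)) * hαβ
      have e2 : α * (KK C n m - s1) + β * (KK C n m - s2)
          = KK C n m - (α * s1 + β * s2) := by linear_combination (KK C n m) * hαβ
      rw [e1, e2] at key
      have key2 := mul_le_mul_of_nonneg_left key (mul_nonneg hc.le hK0.le)
      calc cc C n * KK C n m * vv (α*t1 + β*t2 - (l:ℝ)*dd n) / (KK C n m - (α*s1 + β*s2))
          = cc C n * KK C n m
            * (vv (α*t1+β*t2 - (l:ℝ)*dd n) / (KK C n m - (α*s1+β*s2))) := by ring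
        _ ≤ cc C n * KK C n m * (α * (vv (t1 - (l:ℝ)*dd n)/(KK C n m - s1))
              + β * (vv (t2 - (l:ℝ)*dd n)/(KK C n m - s2))) := key2
        _ = α * (cc C n * KK C n m * vv (t1-(l:ℝ)*dd n)/(KK C n m - s1))
              + β * (cc C n * KK C n m * vv (t2-(l:ℝ)*dd n)/(KK C n m - s2)) := by ring
  -- ---------------- bounds ----------------
  · intro p hp
    rw [memD] at hp
    obtain ⟨hp1, hp2, hp3, hp4⟩ := hp
    have hKp : (0:ℝ) < KK C n m - p.2 := by linarith
    have hcoefp : 0 ≤ cc C n * KK C n m / (KK C n m - p.2) :=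
      div_nonneg (mul_nonneg hc.le hK0.le) hKp.le
    simp only [gg, Set.mem_Icc]
    constructor
    · exact div_nonneg (mul_nonneg (mul_nonneg hc.le hK0.le) (vv_nonneg _)) hKp.le
    · calc cc C n * KK C n m * vv (p.1 - (l:ℝ) * dd n) / (KK C n m - p.2)
          = cc C n * KK C n m / (KK C n m - p.2) * vv (p.1 - (l:ℝ) * dd n) := by ring
        _ ≤ cc C n * KK C n m / (KK C n m - p.2) * vv (2*n*C + 1) :=
            mul_le_mul_of_nonneg_left (vv_mono (by linarith [hxM p.1 hp2])) hcoefp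
        _ ≤ 1 := hPv _ hp3 hp4
  -- ---------------- A1 ----------------
  · intro p hp
    rw [memD] at hp
    obtain ⟨hp1, hp2, hp3, hp4⟩ := hp
    have hKp : (0:ℝ) < KK C n m - p.2 := by linarith
    constructor
    · intro h0
      rw [memN]
      refine ⟨hp1, ?_, hp3, hp4⟩
      by_contra hcon
      push_neg at hcon
      have hvp : 0 < vv (p.1 - (l:ℝ) * dd n) := vv_pos (by linarith)
      have hpos : 0 < gg C n m l p.1 p.2 := by
        simp only [gg]
        exact div_pos (mul_pos (mul_pos hc hK0) hvp) hKp
      exact absurd h0 hpos.ne'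
    · intro hmem
      rw [memN] at hmem
      simp only [gg, vv_of_nonpos (show p.1 - (l:ℝ)*dd n ≤ 0 by linarith [hmem.2.1]),
        mul_zero, zero_div]
  -- ---------------- A2 ----------------
  · intro hlt p hp
    obtain ⟨hpD, hpN⟩ := hp
    rw [memD] at hpD
    obtain ⟨hp1, hp2, hp3, hp4⟩ := hpD
    have ht1 : ((l:ℝ)+1) * dd n < p.1 := by
      by_contra hcon
      push_neg at hcon
      apply hpN
      rw [memN]
      refine ⟨hp1, ?_, hp3, hp4⟩
      push_cast
      linarith
    have hexp : ((l:ℝ)+1) * dd n = (l:ℝ)*dd n + dd n := by ring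
    have hgap : vv (dd n) + vv (p.1 - ((l:ℝ)+1) * dd n) ≤ vv (p.1 - (l:ℝ) * dd n) := by
      have h := vv_gap (dd_pos n) (show dd n ≤ p.1 - (l:ℝ)*dd n by linarith)
      have e : p.1 - (l:ℝ) * dd n - dd n = p.1 - ((l:ℝ)+1) * dd n := by ring
      rwa [e] at h
    have hKs : (0:ℝ) < KK C n m - p.2 := by linarith
    have hcoef0 : 0 ≤ cc C n * KK C n m / (KK C n m - p.2) :=
      div_nonneg (mul_nonneg hc.le hK0.le) hKs.le
    have hcoefc : cc C n ≤ cc C n * KK C n m / (KK C n m - p.2) := by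
      rw [le_div_iff₀ hKs]
      nlinarith [mul_le_mul_of_nonneg_left (show KK C n m - p.2 ≤ KK C n m by linarith) hc.le]
    have e2 : gg C n m l p.1 p.2 - gg C n m (l+1) p.1 p.2
        = cc C n * KK C n m / (KK C n m - p.2)
          * (vv (p.1 - (l:ℝ)*dd n) - vv (p.1 - ((l:ℝ)+1)*dd n)) := by
      simp only [gg]
      push_cast
      ring
    have h3 := mul_le_mul_of_nonneg_left
      (show vv (dd n) ≤ vv (p.1 - (l:ℝ)*dd n) - vv (p.1 - ((l:ℝ)+1)*dd n) by linarith)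
      hcoef0
    have h4 := mul_le_mul_of_nonneg_right hcoefc (vv_nonneg (dd n))
    have h5 : rr C n ≤ cc C n * vv (dd n) := by
      have := rr_le_bb hC n
      rwa [bb] at this
    linarith [e2, h3, h4, h5]
  -- ---------------- A3 ----------------
  · intro t ht
    obtain ⟨htD, htN⟩ := ht
    rw [memD] at htD
    obtain ⟨ht1, ht2, ht3, ht4⟩ := htD
    have hta : (l:ℝ) * dd n < t := by
      by_contra hcon
      push_neg at hcon
      exact htN (by rw [memN]; exact ⟨ht1, hcon, le_rfl, by linarith⟩)
    have hvp : 0 < vv (t - (l:ℝ)*dd n) := vv_pos (by linarith)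
    constructor
    · intro s1 hs1 s2 hs2 h12
      rw [Set.mem_Icc] at hs1 hs2
      simp only [gg]
      exact div_lt_div_of_pos_left (mul_pos (mul_pos hc hK0) hvp)
        (by linarith [hs2.2]) (by linarith)
    · have hKS : KK C n m - (1 + 2*n*C) = 1 + 4*((m:ℝ)+1) * EE C n / rr C n := by
        rw [KK]; ring
      have hm0 : (0:ℝ) ≤ (m:ℝ) := Nat.cast_nonneg m
      have hterm : 0 ≤ 4*((m:ℝ)+1) * EE C n / rr C n := by
        apply div_nonneg _ (rr_pos hC n).le
        nlinarith [EE_nonneg hC n]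
      have hKSpos : (0:ℝ) < KK C n m - (1 + 2*n*C) := by rw [hKS]; linarith
      have e : gg C n m l t (1 + 2*n*C) - gg C n m l t 0
          = cc C n * vv (t - (l:ℝ)*dd n) * (1 + 2*n*C) / (KK C n m - (1 + 2*n*C)) := by
        simp only [gg, sub_zero]
        field_simp
        ring
      rw [e]
      have hvM : 0 < vv (2*n*C) := vv_pos (by linarith)
      have hE : 0 < EE C n := by
        rw [EE]
        exact mul_pos (mul_pos hc hvM) (by linarith)
      have hnum : cc C n * vv (t - (l:ℝ)*dd n) * (1 + 2*n*C) ≤ EE C n := by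
        rw [EE]
        have hvle : vv (t - (l:ℝ)*dd n) ≤ vv (2*n*C) := vv_mono (hxM t ht2)
        have hS0 : (0:ℝ) ≤ 1 + 2*n*C := by linarith
        nlinarith [mul_le_mul_of_nonneg_left (mul_le_mul_of_nonneg_right hvle hS0) hc.le]
      have hden : 4*((m:ℝ)+1) * EE C n / rr C n ≤ KK C n m - (1 + 2*n*C) := by
        rw [hKS]; linarith
      have hdpos : (0:ℝ) < 4*((m:ℝ)+1) * EE C n / rr C n :=
        div_pos (mul_pos (by linarith) hE) (rr_pos hC n)
      calc cc C n * vv (t - (l:ℝ)*dd n) * (1+2*n*C) / (KK C n m - (1+2*n*C))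
          ≤ EE C n / (4*((m:ℝ)+1) * EE C n / rr C n) := div_le_div₀ hE.le hnum hdpos hden
        _ = kk C n m := by
            rw [kk, div_div_eq_mul_div, div_eq_div_iff
              (mul_pos (show (0:ℝ) < 4*((m:ℝ)+1) by linarith) hE).ne'
              (show (4*((m:ℝ)+1)) ≠ 0 by positivity)]
            ring
  -- ---------------- A4 ----------------
  · intro t htD
    have h2 : (0:ℝ) < KK C n (m+1) := KK_pos hC n (m+1)
    simp only [gg, sub_zero]
    field_simp
  -- ---------------- A5 ----------------
  · intro hlt t s r hts hdr htr
    obtain ⟨htD, htN⟩ := hts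
    rw [memD] at htD
    obtain ⟨ht1, ht2, hs1, hs2⟩ := htD
    have hta : (l:ℝ) * dd n < t := by
      by_contra hcon
      push_neg at hcon
      exact htN (by rw [memN]; exact ⟨ht1, hcon, hs1, hs2⟩)
    simp only [gg]
    have harg : t - (l:ℝ)*dd n < t + r - ((l+1:ℕ):ℝ) * dd n := by
      push_cast
      have : ((l:ℝ)+1)*dd n = (l:ℝ)*dd n + dd n := by ring
      linarith
    have hnum : vv (t - (l:ℝ)*dd n) < vv (t + r - ((l+1:ℕ):ℝ)*dd n) :=
      vv_strict (by linarith) harg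
    have hden : (0:ℝ) < KK C n m - s := by linarith
    exact (div_lt_div_iff_of_pos_right hden).mpr (mul_lt_mul_of_pos_left hnum (mul_pos hc hK0))
  -- ---------------- A6 ----------------
  · intro t s hts tr sr hmem htr hg
    obtain ⟨htD, htN⟩ := hts
    rw [memD] at htD
    obtain ⟨ht1, ht2, hs1, hs2⟩ := htD
    have hta : (l:ℝ) * dd n < t := by
      by_contra hcon
      push_neg at hcon
      exact htN (by rw [memN]; exact ⟨ht1, hcon, hs1, hs2⟩)
    have hvp : 0 < vv (t - (l:ℝ)*dd n) := vv_pos (by linarith)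
    have hKs : (0:ℝ) < KK C n m - s := by linarith
    have hApos : 0 < cc C n * KK C n m * vv (t - (l:ℝ)*dd n) :=
      mul_pos (mul_pos hc hK0) hvp
    have hgts : gg C n m l t s
        = cc C n * KK C n m * vv (t - (l:ℝ)*dd n) / (KK C n m - s) := rfl
    have hLpos : 0 < gg C n m l t s := by
      rw [hgts]; exact div_pos hApos hKs
    have hh : Tendsto (fun r2 => cc C n * KK C n m * vv (tr r2 - (l:ℝ)*dd n)) atTop
        (𝓝 (cc C n * KK C n m * vv (t - (l:ℝ)*dd n))) := by
      have h1 : Tendsto (fun r2 => tr r2 - (l:ℝ)*dd n) atTop (𝓝 (t - (l:ℝ)*dd n)) :=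
        htr.sub_const _
      have h2 := (vv_contDiff.continuous.tendsto (t - (l:ℝ)*dd n)).comp h1
      exact h2.const_mul _
    have hev : (fun r2 => cc C n * KK C n m * vv (tr r2 - (l:ℝ)*dd n)
        / gg C n m l (tr r2) (sr r2)) =ᶠ[atTop] (fun r2 => KK C n m - sr r2) := by
      filter_upwards [htr.eventually (eventually_gt_nhds hta)] with r2 hr2
      have hsr := (memD l (tr r2, sr r2)).1 (hmem r2)
      have hKsr : (0:ℝ) < KK C n m - sr r2 := by linarith [hsr.2.2.2]
      have hnum : 0 < cc C n * KK C n m * vv (tr r2 - (l:ℝ)*dd n) :=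
        mul_pos (mul_pos hc hK0) (vv_pos (by linarith))
      have hg2 : gg C n m l (tr r2) (sr r2)
          = cc C n * KK C n m * vv (tr r2 - (l:ℝ)*dd n) / (KK C n m - sr r2) := rfl
      rw [hg2, div_div_eq_mul_div, mul_comm, mul_div_assoc, div_self hnum.ne', mul_one]
    have hdiv := hh.div hg hLpos.ne'
    have hquot : cc C n * KK C n m * vv (t - (l:ℝ)*dd n) / gg C n m l t s
        = KK C n m - s := by
      rw [hgts, div_div_eq_mul_div, mul_comm, mul_div_assoc, div_self hApos.ne', mul_one]
    rw [hquot] at hdiv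
    have hKsr_t : Tendsto (fun r2 => KK C n m - sr r2) atTop (𝓝 (KK C n m - s)) :=
      Filter.Tendsto.congr' hev hdiv
    have hfin : Tendsto (fun r2 => KK C n m - (KK C n m - sr r2)) atTop
        (𝓝 (KK C n m - (KK C n m - s))) :=
      Tendsto.sub tendsto_const_nhds hKsr_t
    simpa using hfin
  -- ---------------- A7 ----------------
  · intro t s t' s' ht0 htt' hs0 hss' hdom
    rw [memD] at hdom
    obtain ⟨h1, h2, h3, h4⟩ := hdom
    simp only [gg]
    have hd2 : (0:ℝ) < KK C n m - s' := by linarith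
    have hnum : cc C n * KK C n m * vv (t - (l:ℝ)*dd n)
        ≤ cc C n * KK C n m * vv (t' - (l:ℝ)*dd n) :=
      mul_le_mul_of_nonneg_left (vv_mono (by linarith)) (mul_nonneg hc.le hK0.le)
    exact div_le_div₀ (mul_nonneg (mul_nonneg hc.le hK0.le) (vv_nonneg _)) hnum hd2
      (by linarith)
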